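/- arXiv:1011.1562 — 3 statements merged into one kernel-verified Lean document; each statement's English description precedes it below -/
import Mathlib

section
/- Let (X, μ, ν, ∗, ⋄) be a complete intuitionistic fuzzy metric space with property ♠ in which every IF contractive sequence is a Cauchy sequence, and let T : X → X be t-uniformly continuous. If for some positive integer m the iterate T^m is an intuitionistic fuzzy contractive mapping (with some contractive constant k ∈ (0,1)), then T has a unique fixed point. -/
open Filter Topology

/-- A continuous t-norm on `[0,1]`. -/
structure IsContTNorm (star : ℝ → ℝ → ℝ) : Prop where
  maps_to : ∀ a ∈ Set.Icc (0:ℝ) 1, ∀ b ∈ Set.Icc (0:ℝ) 1, star a b ∈ Set.Icc (0:ℝ) 1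
  comm : ∀ a ∈ Set.Icc (0:ℝ) 1, ∀ b ∈ Set.Icc (0:ℝ) 1, star a b = star b a
  assoc : ∀ a ∈ Set.Icc (0:ℝ) 1, ∀ b ∈ Set.Icc (0:ℝ) 1, ∀ c ∈ Set.Icc (0:ℝ) 1,
    star (star a b) c = star a (star b c)
  continuous : ContinuousOn (fun p : ℝ × ℝ => star p.1 p.2)
    (Set.Icc (0:ℝ) 1 ×ˢ Set.Icc (0:ℝ) 1)
  star_one : ∀ a ∈ Set.Icc (0:ℝ) 1, star a 1 = a
  mono : ∀ a ∈ Set.Icc (0:ℝ) 1, ∀ b ∈ Set.Icc (0:ℝ) 1, ∀ c ∈ Set.Icc (0:ℝ) 1,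
    ∀ d ∈ Set.Icc (0:ℝ) 1, a ≤ c → b ≤ d → star a b ≤ star c d

/-- A continuous t-conorm on `[0,1]`. -/
structure IsContTConorm (diam : ℝ → ℝ → ℝ) : Prop where
  maps_to : ∀ a ∈ Set.Icc (0:ℝ) 1, ∀ b ∈ Set.Icc (0:ℝ) 1, diam a b ∈ Set.Icc (0:ℝ) 1
  comm : ∀ a ∈ Set.Icc (0:ℝ) 1, ∀ b ∈ Set.Icc (0:ℝ) 1, diam a b = diam b a
  assoc : ∀ a ∈ Set.Icc (0:ℝ) 1, ∀ b ∈ Set.Icc (0:ℝ) 1, ∀ c ∈ Set.Icc (0:ℝ) 1,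
    diam (diam a b) c = diam a (diam b c)
  continuous : ContinuousOn (fun p : ℝ × ℝ => diam p.1 p.2)
    (Set.Icc (0:ℝ) 1 ×ˢ Set.Icc (0:ℝ) 1)
  diam_zero : ∀ a ∈ Set.Icc (0:ℝ) 1, diam a 0 = a
  mono : ∀ a ∈ Set.Icc (0:ℝ) 1, ∀ b ∈ Set.Icc (0:ℝ) 1, ∀ c ∈ Set.Icc (0:ℝ) 1,
    ∀ d ∈ Set.Icc (0:ℝ) 1, a ≤ c → b ≤ d → diam a b ≤ diam c d

/-- An intuitionistic fuzzy metric space structure `(X, μ, ν, ∗, ⋄)` on `X`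
(with the idempotency property (xii)). -/
structure IFMS (X : Type*) where
  mu : X → X → ℝ → ℝ
  nu : X → X → ℝ → ℝ
  star : ℝ → ℝ → ℝ
  dia : ℝ → ℝ → ℝ
  tnorm : IsContTNorm star
  tconorm : IsContTConorm dia
  mu_mem : ∀ x y : X, ∀ t : ℝ, 0 < t → mu x y t ∈ Set.Icc (0:ℝ) 1
  nu_mem : ∀ x y : X, ∀ t : ℝ, 0 < t → nu x y t ∈ Set.Icc (0:ℝ) 1
  sum_le_one : ∀ x y : X, ∀ t : ℝ, 0 < t → mu x y t + nu x y t ≤ 1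
  mu_pos : ∀ x y : X, ∀ t : ℝ, 0 < t → 0 < mu x y t
  mu_eq_one_iff : ∀ x y : X, ∀ t : ℝ, 0 < t → (mu x y t = 1 ↔ x = y)
  mu_symm : ∀ x y : X, ∀ t : ℝ, 0 < t → mu x y t = mu y x t
  mu_triangle : ∀ x y z : X, ∀ s t : ℝ, 0 < s → 0 < t →
    star (mu x y s) (mu y z t) ≤ mu x z (s + t)
  mu_cont : ∀ x y : X, ContinuousOn (mu x y) (Set.Ioi (0:ℝ))
  nu_lt_one : ∀ x y : X, ∀ t : ℝ, 0 < t → nu x y t < 1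
  nu_eq_zero_iff : ∀ x y : X, ∀ t : ℝ, 0 < t → (nu x y t = 0 ↔ x = y)
  nu_symm : ∀ x y : X, ∀ t : ℝ, 0 < t → nu x y t = nu y x t
  nu_triangle : ∀ x y z : X, ∀ s t : ℝ, 0 < s → 0 < t →
    nu x z (s + t) ≤ dia (nu x y s) (nu y z t)
  nu_cont : ∀ x y : X, ContinuousOn (nu x y) (Set.Ioi (0:ℝ))
  star_idem : ∀ a ∈ Set.Ioo (0:ℝ) 1, star a a = a
  dia_idem : ∀ a ∈ Set.Ioo (0:ℝ) 1, dia a a = a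

namespace IFMS

variable {X : Type*}

/-- Convergence of a sequence in an IFMS. -/
def Converges (A : IFMS X) (x : ℕ → X) (l : X) : Prop :=
  ∀ t : ℝ, 0 < t →
    Tendsto (fun n => A.mu (x n) l t) atTop (𝓝 1) ∧
    Tendsto (fun n => A.nu (x n) l t) atTop (𝓝 0)

/-- Cauchy sequences in an IFMS. -/
def IsCauchySeq (A : IFMS X) (x : ℕ → X) : Prop :=
  ∀ r ∈ Set.Ioo (0:ℝ) 1, ∀ t : ℝ, 0 < t → ∃ n₀ : ℕ, ∀ n ≥ n₀, ∀ m ≥ n₀,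
    1 - r < A.mu (x n) (x m) t ∧ A.nu (x n) (x m) t < r

/-- Completeness of an IFMS. -/
def Complete (A : IFMS X) : Prop :=
  ∀ x : ℕ → X, A.IsCauchySeq x → ∃ l : X, A.Converges x l

/-- Property ♠. -/
def PropertySpade (A : IFMS X) : Prop :=
  ∀ x y : X,
    Tendsto (fun t => A.mu x y t) atTop (𝓝 1) ∧
    Tendsto (fun t => A.nu x y t) atTop (𝓝 0)

/-- Intuitionistic fuzzy contractive mapping with contractive constant `k`. -/
def IFContractiveWith (A : IFMS X) (k : ℝ) (f : X → X) : Prop :=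
  ∀ x y : X, ∀ t : ℝ, 0 < t →
    1 / A.mu (f x) (f y) t - 1 ≤ k * (1 / A.mu x y t - 1) ∧
    1 / A.nu (f x) (f y) t - 1 ≥ (1 / k) * (1 / A.nu x y t - 1)

/-- Intuitionistic fuzzy contractive sequence. -/
def IFContractiveSeq (A : IFMS X) (x : ℕ → X) : Prop :=
  ∃ k ∈ Set.Ioo (0:ℝ) 1, ∀ n : ℕ, ∀ t : ℝ, 0 < t →
    1 / A.mu (x (n + 1)) (x (n + 2)) t - 1 ≤ k * (1 / A.mu (x n) (x (n + 1)) t - 1) ∧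
    1 / A.nu (x (n + 1)) (x (n + 2)) t - 1 ≥ (1 / k) * (1 / A.nu (x n) (x (n + 1)) t - 1)

/-- t-uniform continuity. -/
def TUniformlyContinuous (A : IFMS X) (f : X → X) : Prop :=
  ∀ ε ∈ Set.Ioo (0:ℝ) 1, ∃ r ∈ Set.Ioo (0:ℝ) 1, ∀ x y : X, ∀ t : ℝ, 0 < t →
    1 - r ≤ A.mu x y t → A.nu x y t ≤ r →
    1 - ε ≤ A.mu (f x) (f y) t ∧ A.nu (f x) (f y) t ≤ ε

/-- TS-IF contractive mapping with contraction constant `k`. -/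
def TSIFContractiveWith (A : IFMS X) (k : ℝ) (T : X → X) : Prop :=
  ∀ x y : X, ∀ t : ℝ, 0 < t →
    A.mu x y t ≤ k * A.mu (T x) (T y) t ∧
    (1 / k) * A.nu (T x) (T y) t ≤ A.nu x y t

end IFMS


namespace IFMSFPAux

variable {X : Type*}

lemma contr_bounds (A : IFMS X) {k : ℝ} (hk : k ∈ Set.Ioo (0:ℝ) 1) {f : X → X}
    (hf : A.IFContractiveWith k f) (x y : X) (t : ℝ) (ht : 0 < t) :
    A.mu x y t ≤ A.mu (f x) (f y) t ∧ A.nu (f x) (f y) t ≤ A.nu x y t := by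
  obtain ⟨h1, h2⟩ := hf x y t ht
  have ha0 := A.mu_pos x y t ht
  have ha1 := (A.mu_mem x y t ht).2
  have hb0 := A.mu_pos (f x) (f y) t ht
  have hb1 := (A.mu_mem (f x) (f y) t ht).2
  have hia : 1 ≤ 1 / A.mu x y t := one_le_one_div ha0 ha1
  constructor
  · have hib : 1 / A.mu (f x) (f y) t ≤ 1 / A.mu x y t := by nlinarith [hk.1, hk.2]
    exact le_of_one_div_le_one_div hb0 hib
  · by_cases hc0 : A.nu x y t = 0
    · have hxy : x = y := (A.nu_eq_zero_iff x y t ht).mp hc0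
      rw [hc0, hxy]
      exact le_of_eq ((A.nu_eq_zero_iff (f y) (f y) t ht).mpr rfl)
    · have hc := (A.nu_mem x y t ht).1
      have hcpos : 0 < A.nu x y t := lt_of_le_of_ne hc (Ne.symm hc0)
      have hc1 : A.nu x y t < 1 := A.nu_lt_one x y t ht
      have hic : 1 ≤ 1 / A.nu x y t := one_le_one_div hcpos (le_of_lt hc1)
      have hik : 1 ≤ 1 / k := one_le_one_div hk.1 (le_of_lt hk.2)
      have hd0 : 0 < A.nu (f x) (f y) t := by
        rcases lt_or_eq_of_le (A.nu_mem (f x) (f y) t ht).1 with h | h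
        · exact h
        · exfalso
          rw [← h, div_zero] at h2
          have hnn : (0:ℝ) ≤ (1/k) * (1 / A.nu x y t - 1) :=
            mul_nonneg (by linarith) (by linarith)
          linarith
      have hid : 1 / A.nu x y t ≤ 1 / A.nu (f x) (f y) t := by nlinarith
      exact le_of_one_div_le_one_div hcpos hid

lemma converges_unique (A : IFMS X) {x : ℕ → X} {p q : X}
    (hp : A.Converges x p) (hq : A.Converges x q) : p = q := by
  have h2 : (0:ℝ) < 1/2 := by norm_num
  have hle : A.mu p q 1 ≤ 1 := (A.mu_mem p q 1 one_pos).2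
  have key : A.mu p q 1 = 1 := by
    by_contra hne
    have hlt : A.mu p q 1 < 1 := lt_of_le_of_ne hle hne
    obtain ⟨c, hc1, hc2⟩ := exists_between hlt
    have hc0 : 0 < c := lt_trans (A.mu_pos p q 1 one_pos) hc1
    have e1 := (hp (1/2) h2).1.eventually (eventually_gt_nhds hc2)
    have e2 := (hq (1/2) h2).1.eventually (eventually_gt_nhds hc2)
    obtain ⟨n, hn1, hn2⟩ := (e1.and e2).exists
    have tri := A.mu_triangle p (x n) q (1/2) (1/2) h2 h2
    rw [show (1:ℝ)/2 + 1/2 = 1 by norm_num] at tri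
    rw [A.mu_symm p (x n) (1/2) h2] at tri
    have m1 := A.mu_mem (x n) p (1/2) h2
    have m2 := A.mu_mem (x n) q (1/2) h2
    have hcIcc : c ∈ Set.Icc (0:ℝ) 1 := ⟨le_of_lt hc0, le_of_lt hc2⟩
    have mono := A.tnorm.mono c hcIcc c hcIcc _ m1 _ m2 (le_of_lt hn1) (le_of_lt hn2)
    rw [A.star_idem c ⟨hc0, hc2⟩] at mono
    linarith
  exact (A.mu_eq_one_iff p q 1 one_pos).mp key

lemma fixed_unique (A : IFMS X) {k : ℝ} (hk : k ∈ Set.Ioo (0:ℝ) 1) {f : X → X}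
    (hf : A.IFContractiveWith k f) {p q : X} (hp : f p = p) (hq : f q = q) : p = q := by
  have h := (hf p q 1 one_pos).1
  rw [hp, hq] at h
  have hm := (A.mu_mem p q 1 one_pos).2
  have hpos := A.mu_pos p q 1 one_pos
  have h1 : 1 ≤ 1 / A.mu p q 1 := one_le_one_div hpos hm
  have hcancel : A.mu p q 1 * (1 / A.mu p q 1) = 1 := mul_one_div_cancel hpos.ne'
  have : 1 ≤ A.mu p q 1 := by nlinarith [hk.1, hk.2]
  exact (A.mu_eq_one_iff p q 1 one_pos).mp (le_antisymm hm this)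

end IFMSFPAux

/-- if some iterate `T^m` is IF contractive and `T` is t-uniformly
continuous, then `T` has a unique fixed point. -/
theorem fixed_point_of_power_contractive {X : Type*} [Nonempty X] (A : IFMS X)
    (hcomp : A.Complete) (hspade : A.PropertySpade)
    (hcs : ∀ x : ℕ → X, A.IFContractiveSeq x → A.IsCauchySeq x)
    (T : X → X) (hT : A.TUniformlyContinuous T)
    (m : ℕ) (hm : 0 < m) (k : ℝ) (hk : k ∈ Set.Ioo (0:ℝ) 1)
    (hTm : A.IFContractiveWith k (T^[m])) :
    ∃! p : X, T p = p := by
  classical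
  set f := T^[m] with hf
  obtain ⟨x0⟩ := ‹Nonempty X›
  set x : ℕ → X := fun n => f^[n] x0 with hx
  have hstep : ∀ n, x (n+1) = f (x n) := fun n => Function.iterate_succ_apply' f n x0
  have bounds := IFMSFPAux.contr_bounds A hk hTm
  have hcontr : A.IFContractiveSeq x := by
    refine ⟨k, hk, fun n t ht => ?_⟩
    have h := hTm (x n) (x (n+1)) t ht
    rw [← hstep (n+1), ← hstep n] at h
    simpa using h
  obtain ⟨p, hpconv⟩ := hcomp x (hcs x hcontr)
  have hshift : A.Converges (fun n => x (n+1)) p := fun t ht =>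
    ⟨(hpconv t ht).1.comp (tendsto_add_atTop_nat 1),
     (hpconv t ht).2.comp (tendsto_add_atTop_nat 1)⟩
  have hshift2 : A.Converges (fun n => x (n+1)) (f p) := by
    intro t ht
    constructor
    · refine tendsto_of_tendsto_of_tendsto_of_le_of_le (hpconv t ht).1
        tendsto_const_nhds (fun n => ?_) (fun n => ?_)
      · simp only [hstep n]; exact (bounds (x n) p t ht).1
      · exact (A.mu_mem _ _ t ht).2
    · refine tendsto_of_tendsto_of_tendsto_of_le_of_le tendsto_const_nhds
        (hpconv t ht).2 (fun n => ?_) (fun n => ?_)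
      · exact (A.nu_mem _ _ t ht).1
      · simp only [hstep n]; exact (bounds (x n) p t ht).2
  have hpfix : f p = p := IFMSFPAux.converges_unique A hshift2 hshift
  have hTpfix : f (T p) = T p := by
    rw [hf, ← Function.iterate_succ_apply, Function.iterate_succ_apply', ← hf, hpfix]
  have hTp : T p = p := IFMSFPAux.fixed_unique A hk hTm hTpfix hpfix
  refine ⟨p, hTp, fun q hq => ?_⟩
  have hqfix : f q = q := by rw [hf]; exact Function.iterate_fixed hq m
  exact IFMSFPAux.fixed_unique A hk hTm hqfix hpfix
end

section
/- Let (X, μ, ν, ∗, ⋄) be an intuitionistic fuzzy metric space. If f : X → X is an intuitionistic fuzzy contractive mapping with contractive constant k ∈ (0,1), then f is t-uniformly continuous. -/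
open Filter Topology

/-- an IF contractive mapping is t-uniformly continuous. -/
theorem ifContractive_tUniformlyContinuous {X : Type*} (A : IFMS X)
    (f : X → X) (k : ℝ) (hk : k ∈ Set.Ioo (0:ℝ) 1)
    (hf : A.IFContractiveWith k f) :
    A.TUniformlyContinuous f := by
  obtain ⟨hk0, hk1⟩ := hk
  intro ε hε
  obtain ⟨hε0, hε1⟩ := hε
  refine ⟨ε, ⟨hε0, hε1⟩, fun x y t ht hmu hnu => ?_⟩
  obtain ⟨hfm, hfn⟩ := hf x y t ht
  have hm := A.mu_pos x y t ht
  have hm1 := (A.mu_mem x y t ht).2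
  have hfm0 := A.mu_pos (f x) (f y) t ht
  have hfm1 := (A.mu_mem (f x) (f y) t ht).2
  have hε' : (0:ℝ) < 1 - ε := by linarith
  constructor
  · -- mu part
    have h1 : 1 / A.mu x y t - 1 ≤ ε / (1 - ε) := by
      rw [div_sub' (ne_of_gt hm), div_le_div_iff₀ hm hε']
      nlinarith
    have h2 : 1 / A.mu (f x) (f y) t - 1 ≤ ε / (1 - ε) := by
      have hk' : k * (1 / A.mu x y t - 1) ≤ 1 / A.mu x y t - 1 := by
        have : 0 ≤ 1 / A.mu x y t - 1 := by
          have : A.mu x y t ≤ 1 := hm1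
          rw [sub_nonneg, le_div_iff₀ hm]; linarith
        nlinarith
      linarith
    have h3 : 1 / A.mu (f x) (f y) t ≤ 1 / (1 - ε) := by
      have : ε / (1 - ε) = 1 / (1 - ε) - 1 := by field_simp; ring
      linarith [h2, this.symm.le]
    calc 1 - ε = 1 / (1 / (1 - ε)) := by rw [one_div_one_div]
      _ ≤ 1 / (1 / A.mu (f x) (f y) t) := by
          apply one_div_le_one_div_of_le
          · positivity
          · exact h3
      _ = A.mu (f x) (f y) t := one_div_one_div _
  · -- nu part
    by_cases hxy : x = y
    · subst hxy
      have : A.nu (f x) (f x) t = 0 := (A.nu_eq_zero_iff (f x) (f x) t ht).mpr rfl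
      linarith
    · have hn0 : 0 < A.nu x y t := by
        rcases lt_or_eq_of_le (A.nu_mem x y t ht).1 with h | h
        · exact h
        · exact absurd ((A.nu_eq_zero_iff x y t ht).mp h.symm) hxy
      by_cases hfn0 : A.nu (f x) (f y) t = 0
      · rw [hfn0]; linarith
      · have hfn0' : 0 < A.nu (f x) (f y) t :=
          lt_of_le_of_ne (A.nu_mem (f x) (f y) t ht).1 (Ne.symm hfn0)
        have hn1 : A.nu x y t < 1 := A.nu_lt_one x y t ht
        have h1 : 1 / ε - 1 ≤ 1 / A.nu x y t - 1 := by
          have := one_div_le_one_div_of_le hn0 hnu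
          linarith
        have hk' : 1 / A.nu x y t - 1 ≤ (1/k) * (1 / A.nu x y t - 1) := by
          have hpos : 0 ≤ 1 / A.nu x y t - 1 := by
            rw [sub_nonneg, le_div_iff₀ hn0]; linarith
          have : (1:ℝ) ≤ 1/k := by rw [le_div_iff₀ hk0]; linarith
          nlinarith
        have h2 : 1 / ε ≤ 1 / A.nu (f x) (f y) t := by linarith
        calc A.nu (f x) (f y) t = 1 / (1 / A.nu (f x) (f y) t) := by
              rw [one_div_one_div]
          _ ≤ 1 / (1 / ε) := by
              apply one_div_le_one_div_of_le
              · positivity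
              · exact h2
          _ = ε := one_div_one_div ε
end

section
/- Let (X, μ, ν, ∗, ⋄) be a complete intuitionistic fuzzy metric space with property ♠ in which every IF contractive sequence is a Cauchy sequence. If T : X → X is an intuitionistic fuzzy contractive mapping with contractive constant k ∈ (0,1), then T has a unique fixed point. -/
open Filter Topology

/-- Banach fixed point theorem for IF contractive mappings. -/
theorem ifContractive_fixed_point {X : Type*} [Nonempty X] (A : IFMS X)
    (hcomp : A.Complete) (hspade : A.PropertySpade)
    (hcs : ∀ x : ℕ → X, A.IFContractiveSeq x → A.IsCauchySeq x)
    (T : X → X) (k : ℝ) (hk : k ∈ Set.Ioo (0:ℝ) 1)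
    (hT : A.IFContractiveWith k T) :
    ∃! p : X, T p = p := by
  obtain ⟨x0⟩ := ‹Nonempty X›
  set x : ℕ → X := fun n => T^[n] x0 with hx
  have hxsucc : ∀ n, x (n + 1) = T (x n) := fun n => Function.iterate_succ_apply' T n x0
  -- μ is nondecreasing under T
  have hmuT : ∀ a b : X, ∀ t : ℝ, 0 < t → A.mu a b t ≤ A.mu (T a) (T b) t := by
    intro a b t ht
    have h1 := (hT a b t ht).1
    have hm := A.mu_pos a b t ht
    have hm1 := (A.mu_mem a b t ht).2
    have hT0 := A.mu_pos (T a) (T b) t ht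
    have hd : 0 ≤ 1 / A.mu a b t - 1 := by
      have := one_le_one_div hm hm1
      linarith
    have h2 : 1 / A.mu (T a) (T b) t ≤ 1 / A.mu a b t := by
      nlinarith [hk.1, hk.2]
    exact le_of_one_div_le_one_div hT0 h2
  -- the iterate sequence is IF contractive
  have hcontr : A.IFContractiveSeq x := by
    refine ⟨k, hk, fun n t ht => ?_⟩
    have h := hT (x n) (x (n + 1)) t ht
    rw [← hxsucc n, ← hxsucc (n + 1)] at h
    exact h
  obtain ⟨p, hp⟩ := hcomp x (hcs x hcontr)
  -- p is a fixed point
  have hfix : T p = p := by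
    have key : ∀ r ∈ Set.Ioo (0:ℝ) 1, 1 - r ≤ A.mu p (T p) 1 := by
      intro r hr
      have hhalf : (0:ℝ) < 1/2 := by norm_num
      have hev : ∀ᶠ n in atTop, 1 - r < A.mu (x n) p (1/2) :=
        (hp (1/2) hhalf).1.eventually (eventually_gt_nhds (by linarith [hr.1]))
      obtain ⟨N, hN⟩ := eventually_atTop.mp hev
      have h1 : 1 - r < A.mu (x (N + 1)) p (1/2) := hN (N + 1) (by omega)
      have h2 : 1 - r < A.mu (x (N + 1)) (T p) (1/2) := by
        rw [hxsucc N]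
        exact lt_of_lt_of_le (hN N le_rfl) (hmuT (x N) p (1/2) hhalf)
      have htri := A.mu_triangle p (x (N + 1)) (T p) (1/2) (1/2) hhalf hhalf
      have hmemr : (1 - r) ∈ Set.Icc (0:ℝ) 1 := ⟨by linarith [hr.2], by linarith [hr.1]⟩
      have hma := A.mu_mem p (x (N + 1)) (1/2) hhalf
      have hmb := A.mu_mem (x (N + 1)) (T p) (1/2) hhalf
      have hsymm : A.mu p (x (N + 1)) (1/2) = A.mu (x (N + 1)) p (1/2) :=
        A.mu_symm p (x (N + 1)) (1/2) hhalf
      have hmono := A.tnorm.mono (1 - r) hmemr (1 - r) hmemr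
        (A.mu p (x (N + 1)) (1/2)) hma (A.mu (x (N + 1)) (T p) (1/2)) hmb
        (by rw [hsymm]; exact h1.le) h2.le
      have hidem := A.star_idem (1 - r) ⟨by linarith [hr.2], by linarith [hr.1]⟩
      have : (1:ℝ)/2 + 1/2 = 1 := by norm_num
      rw [this] at htri
      calc 1 - r = A.star (1 - r) (1 - r) := hidem.symm
        _ ≤ _ := hmono
        _ ≤ _ := htri
    have hone : A.mu p (T p) 1 = 1 := by
      have hle := (A.mu_mem p (T p) 1 one_pos).2
      have hge : 1 ≤ A.mu p (T p) 1 := by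
        by_contra h
        push_neg at h
        have hpos := A.mu_pos p (T p) 1 one_pos
        have := key ((1 - A.mu p (T p) 1) / 2) ⟨by linarith, by linarith⟩
        linarith
      linarith
    exact ((A.mu_eq_one_iff p (T p) 1 one_pos).mp hone).symm
  refine ⟨p, hfix, fun q hq => ?_⟩
  -- uniqueness
  have h1 := (hT q p 1 one_pos).1
  rw [hq, hfix] at h1
  have hm := A.mu_pos q p 1 one_pos
  have hm1 := (A.mu_mem q p 1 one_pos).2
  have hd : 0 ≤ 1 / A.mu q p 1 - 1 := by
    have := one_le_one_div hm hm1
    linarith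
  have hmu1 : A.mu q p 1 = 1 := by
    have hd0 : 1 / A.mu q p 1 - 1 = 0 := by nlinarith [hk.2]
    have : 1 / A.mu q p 1 = 1 := by linarith
    field_simp at this
    linarith
  exact (A.mu_eq_one_iff q p 1 one_pos).mp hmu1
end
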